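/- Let X be a metric space with x₀ ∈ X a non-isolated point, and let f, g: X → ℝ be continuous infinitesimal similitudes at x₀. If the product fg is an infinitesimal similitude at x₀, then (D(fg))(x₀) ≤ |g(x₀)|·(Df)(x₀) + |f(x₀)|·(Dg)(x₀). -/
import Mathlib


open Filter Topology

def IsInfSim {X Y : Type*} [MetricSpace X] [MetricSpace Y] (f : X → Y) (x : X) (L : ℝ) : Prop :=
  ∀ u v : ℕ → X, (∀ n, u n ≠ v n) →
    Tendsto u atTop (𝓝 x) → Tendsto v atTop (𝓝 x) →
    Tendsto (fun n => dist (f (u n)) (f (v n)) / dist (u n) (v n)) atTop (𝓝 L)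

theorem stmt7 {X : Type*} [MetricSpace X] (x₀ : X) (h0 : (𝓝[≠] x₀).NeBot)
    (f g : X → ℝ) (Lf Lg L : ℝ)
    (hfc : ContinuousAt f x₀) (hgc : ContinuousAt g x₀)
    (hf : IsInfSim f x₀ Lf) (hg : IsInfSim g x₀ Lg)
    (hfg : IsInfSim (f * g) x₀ L) :
    L ≤ |g x₀| * Lf + |f x₀| * Lg := by
  have hpt : ∀ n : ℕ, ∃ y : X, y ≠ x₀ ∧ dist y x₀ < 1 / (n + 1) := by
    intro n
    have hball : Metric.ball x₀ (1 / (n + 1)) ∩ {x₀}ᶜ ∈ 𝓝[≠] x₀ :=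
      Filter.inter_mem (nhdsWithin_le_nhds (Metric.ball_mem_nhds x₀ (by positivity)))
        self_mem_nhdsWithin
    obtain ⟨y, hy1, hy2⟩ := Filter.nonempty_of_mem hball
    exact ⟨y, hy2, by simpa [Metric.mem_ball] using hy1⟩
  choose u hune hud using hpt
  have hutend : Tendsto u atTop (𝓝 x₀) := by
    rw [tendsto_iff_dist_tendsto_zero]
    refine squeeze_zero (fun n => dist_nonneg) (fun n => (hud n).le) ?_
    exact tendsto_one_div_add_atTop_nhds_zero_nat
  have hA := hfg u (fun _ => x₀) hune hutend tendsto_const_nhds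
  have hB := hf u (fun _ => x₀) hune hutend tendsto_const_nhds
  have hC := hg u (fun _ => x₀) hune hutend tendsto_const_nhds
  have hG : Tendsto (fun n => g (u n)) atTop (𝓝 (g x₀)) := hgc.tendsto.comp hutend
  have hRHS : Tendsto
      (fun n => |g (u n)| * (dist (f (u n)) (f x₀) / dist (u n) x₀)
        + |f x₀| * (dist (g (u n)) (g x₀) / dist (u n) x₀)) atTop
      (𝓝 (|g x₀| * Lf + |f x₀| * Lg)) :=
    (hG.abs.mul hB).add (tendsto_const_nhds.mul hC)
  refine le_of_tendsto_of_tendsto' hA hRHS (fun n => ?_)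
  have hd : 0 < dist (u n) x₀ := dist_pos.2 (hune n)
  rw [← mul_div_assoc, ← mul_div_assoc, ← add_div]
  gcongr
  simp only [Pi.mul_apply, Real.dist_eq]
  calc |f (u n) * g (u n) - f x₀ * g x₀|
      = |(f (u n) - f x₀) * g (u n) + f x₀ * (g (u n) - g x₀)| := by ring_nf
    _ ≤ |(f (u n) - f x₀) * g (u n)| + |f x₀ * (g (u n) - g x₀)| := abs_add_le _ _
    _ = |g (u n)| * |f (u n) - f x₀| + |f x₀| * |g (u n) - g x₀| := by
        rw [abs_mul, abs_mul, mul_comm |f (u n) - f x₀|]
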